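/- Let K be a field of characteristic ≠ 2 and let (a₀,b₀) be a nontrivial node. Then (a₀,b₀) is 2-times advanceable if and only if ((a₀+b₀)/2)²·a₀b₀ is a fourth power in K. Moreover, if additionally −1 is a square in K and ((a₀+b₀)/2)²·a₀b₀ is a fourth power, then every nontrivial node (a₁,b₁) with (a₀,b₀) ↦ (a₁,b₁) is itself 1-times advanceable (i.e., both children of (a₀,b₀) can be advanced at least once). -/
import Mathlib


namespace AGM

variable {K : Type*} [Field K]

/-- A node `(a,b)` is nontrivial if `a`, `b`, `a+b`, `a-b` are all nonzero. -/
def Nontriv (p : K × K) : Prop :=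
  p.1 ≠ 0 ∧ p.2 ≠ 0 ∧ p.1 + p.2 ≠ 0 ∧ p.1 - p.2 ≠ 0

/-- AGM advancement between nontrivial nodes: `2c = a + b` and `d² = ab`. -/
def Adv (p q : K × K) : Prop :=
  Nontriv p ∧ Nontriv q ∧ 2 * q.1 = p.1 + p.2 ∧ q.2 ^ 2 = p.1 * p.2

/-- `AdvN n p`: there is a chain of `n` successive AGM advancements through
nontrivial nodes starting at `p`. -/
def AdvN : ℕ → K × K → Prop
  | 0, p => Nontriv p
  | n + 1, p => ∃ q, Adv p q ∧ AdvN n q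

/-- `BackN n p`: there is a chain of `n` successive AGM advancements through
nontrivial nodes ending at `p`. -/
def BackN : ℕ → K × K → Prop
  | 0, p => Nontriv p
  | n + 1, p => ∃ q, Adv q p ∧ BackN n q

/-- Indefinitely advanceable nodes. -/
def AdvInf (p : K × K) : Prop := ∀ n, AdvN n p

/-- Indefinitely backtrackable nodes. -/
def BackInf (p : K × K) : Prop := ∀ n, BackN n p

/-- Nontrivial k-values: `k ∉ {0, 1, -1}`. -/
def Tk (k : K) : Prop := k ≠ 0 ∧ k ≠ 1 ∧ k ≠ -1

/-- k-advancement: `(1+k₁)² k₂² = 4 k₁` for nontrivial k-values. -/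
def kAdv (k₁ k₂ : K) : Prop := Tk k₁ ∧ Tk k₂ ∧ (1 + k₁) ^ 2 * k₂ ^ 2 = 4 * k₁

/-- `TAdvN n k`: a chain of `n` k-advancements within `T_K` starting at `k`. -/
def TAdvN : ℕ → K → Prop
  | 0, k => Tk k
  | n + 1, k => ∃ k₂, kAdv k k₂ ∧ TAdvN n k₂

/-- `TBackN n k`: a chain of `n` k-advancements within `T_K` ending at `k`. -/
def TBackN : ℕ → K → Prop
  | 0, k => Tk k
  | n + 1, k => ∃ k₁, kAdv k₁ k ∧ TBackN n k₁

/-- Indefinitely advanceable k-values. -/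
def TAdvInf (k : K) : Prop := ∀ n, TAdvN n k

/-- Indefinitely backtrackable k-values. -/
def TBackInf (k : K) : Prop := ∀ n, TBackN n k

end AGM

lemma four_ne {K : Type*} [Field K] (h2 : (2 : K) ≠ 0) : (4 : K) ≠ 0 := by
  intro h
  apply h2
  have h22 : (2 : K) * 2 = 0 := by rw [show (2:K)*2 = 4 by norm_num, h]
  exact mul_self_eq_zero.mp h22

lemma step_aux {K : Type*} [Field K] (h2 : (2 : K) ≠ 0) (a₁ b₁ b₂ : K)
    (hnt : AGM.Nontriv (a₁, b₁)) (hb₂ : b₂ ^ 2 = a₁ * b₁) :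
    AGM.AdvN 1 (a₁, b₁) := by
  obtain ⟨ha, hb, hs, hd⟩ := hnt
  simp only at ha hb hs hd
  have hb₂0 : b₂ ≠ 0 := by
    intro h
    apply mul_ne_zero ha hb
    rw [← hb₂, h]; ring
  have hc : 2 * ((a₁ + b₁) / 2) = a₁ + b₁ := by
    rw [mul_comm]; exact div_mul_cancel₀ _ h2
  have key4 : 4 * (((a₁ + b₁) / 2 + b₂) * ((a₁ + b₁) / 2 - b₂)) = (a₁ - b₁) ^ 2 := by
    linear_combination (2 * ((a₁ + b₁) / 2) + a₁ + b₁) * hc - 4 * hb₂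
  have hdne : ((a₁ + b₁) / 2 + b₂) * ((a₁ + b₁) / 2 - b₂) ≠ 0 := by
    intro h
    exact pow_ne_zero 2 hd (by rw [← key4, h, mul_zero])
  have hq : AGM.Nontriv (((a₁ + b₁) / 2, b₂) : K × K) :=
    ⟨div_ne_zero hs h2, hb₂0, left_ne_zero_of_mul hdne, right_ne_zero_of_mul hdne⟩
  exact ⟨((a₁ + b₁) / 2, b₂), ⟨⟨ha, hb, hs, hd⟩, hq, hc, hb₂⟩, hq⟩

theorem stmt1 {K : Type*} [Field K] (hchar : (2 : K) ≠ 0)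
    (a₀ b₀ : K) (hnt : AGM.Nontriv (a₀, b₀)) :
    (AGM.AdvN 2 (a₀, b₀) ↔ ∃ t : K, ((a₀ + b₀) / 2) ^ 2 * (a₀ * b₀) = t ^ 4) ∧
    (IsSquare (-1 : K) → (∃ t : K, ((a₀ + b₀) / 2) ^ 2 * (a₀ * b₀) = t ^ 4) →
      ∀ a₁ b₁ : K, AGM.Adv (a₀, b₀) (a₁, b₁) → AGM.AdvN 1 (a₁, b₁)) := by
  obtain ⟨ha, hb, hab, hab'⟩ := hnt
  simp only at ha hb hab hab'
  have hA0 : (a₀ + b₀) / 2 ≠ 0 := div_ne_zero hab hchar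
  have he : (a₀ + b₀) / 2 * 2 = a₀ + b₀ := div_mul_cancel₀ _ hchar
  constructor
  · constructor
    · rintro ⟨⟨a₁, b₁⟩, ⟨_, hnt1, h2c, hd⟩, ⟨a₂, b₂⟩, ⟨_, hnt2, h2c', hd'⟩, _⟩
      simp only at h2c hd h2c' hd'
      have hA : (a₀ + b₀) / 2 = a₁ := by
        rw [div_eq_iff hchar]; linear_combination -h2c
      refine ⟨b₂, ?_⟩
      rw [hA]
      linear_combination -a₁ ^ 2 * hd - (b₂ ^ 2 + a₁ * b₁) * hd'
    · rintro ⟨t, ht⟩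
      set c : K := (a₀ + b₀) / 2 with hcdef
      have hc : 2 * c = a₀ + b₀ := by rw [mul_comm]; exact he
      have ht0 : t ≠ 0 := by
        intro h; rw [h] at ht
        apply mul_ne_zero (pow_ne_zero 2 hA0) (mul_ne_zero ha hb)
        rw [ht]; ring
      set b₁ : K := t ^ 2 / c with hb₁def
      have hb₁c : b₁ * c = t ^ 2 := div_mul_cancel₀ _ hA0
      have hb₁0 : b₁ ≠ 0 := by
        intro h
        apply pow_ne_zero 2 ht0
        rw [← hb₁c, h, zero_mul]
      have hb₁sq : b₁ ^ 2 = a₀ * b₀ := by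
        have hz : c ^ 2 * (b₁ ^ 2 - a₀ * b₀) = 0 := by
          linear_combination (b₁ * c + t ^ 2) * hb₁c - ht
        rcases mul_eq_zero.mp hz with h | h
        · exact absurd h (pow_ne_zero 2 hA0)
        · linear_combination h
      have key4 : 4 * ((c + b₁) * (c - b₁)) = (a₀ - b₀) ^ 2 := by
        linear_combination (2 * c + a₀ + b₀) * hc - 4 * hb₁sq
      have hdne : (c + b₁) * (c - b₁) ≠ 0 := by
        intro h
        exact pow_ne_zero 2 hab' (by rw [← key4, h, mul_zero])
      have hnt1 : AGM.Nontriv ((c, b₁) : K × K) :=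
        ⟨hA0, hb₁0, left_ne_zero_of_mul hdne, right_ne_zero_of_mul hdne⟩
      refine ⟨(c, b₁), ⟨⟨ha, hb, hab, hab'⟩, hnt1, hc, hb₁sq⟩, ?_⟩
      exact step_aux hchar c b₁ t hnt1 (by linear_combination -hb₁c)
  · rintro ⟨i, hi⟩ ⟨t, ht⟩ a₁ b₁ ⟨_, hnt1, h2c, hd⟩
    simp only at h2c hd
    have ht' : (a₀ + b₀) ^ 2 * (a₀ * b₀) = 4 * t ^ 4 := by
      rw [← he]; linear_combination 4 * ht
    have hsq4 : 4 * ((a₁ * b₁ - t ^ 2) * (a₁ * b₁ + t ^ 2)) = 0 := by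
      linear_combination 4 * a₁ ^ 2 * hd + a₀ * b₀ * (2 * a₁ + a₀ + b₀) * h2c + ht'
    have hsq : (a₁ * b₁ - t ^ 2) * (a₁ * b₁ + t ^ 2) = 0 := by
      rcases mul_eq_zero.mp hsq4 with h | h
      · exact absurd h (four_ne hchar)
      · exact h
    rcases mul_eq_zero.mp hsq with h | h
    · exact step_aux hchar a₁ b₁ t hnt1 (by linear_combination -h)
    · exact step_aux hchar a₁ b₁ (i * t) hnt1 (by linear_combination -t ^ 2 * hi - h)
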